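/- Let p > 2 be prime, let e ≥ 2, and let a(t) be a monic polynomial of degree e over Z_p with companion matrix C(a(t)). Set G = B(I_e, C(a(t))). Let L = [I_{e−1} | 0] and L' = [0 | I_{e−1}] be the (e−1)×e matrices obtained by deleting the last row of I_e and of C(a(t)) respectively, and set M = B(L, L'). Then the map (a, b, c) ↦ ((a, 0), b, c) is an injective group homomorphism from M into G whose image is a maximal subgroup of G, and d(G) = 1 + d(M). In particular, G has a maximal subgroup whose isomorphism type depends only on p and e, not on a(t). -/

import Mathlib

open Matrix in
/-- The Brahana-Baer group `B(L 0, …, L (t-1))` determined by a family of `r × s`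
matrices over `ZMod p`: underlying set `(ZMod p)^r × (ZMod p)^s × (ZMod p)^t` with
multiplication `(a,b,c)·(a',b',c') = (a+a', b+b', c+c'+(a L₁ b'ᵀ, …, a L_t b'ᵀ))`. -/
def BGroup (p r s t : ℕ) (L : Fin t → Matrix (Fin r) (Fin s) (ZMod p)) : Type :=
  (Fin r → ZMod p) × (Fin s → ZMod p) × (Fin t → ZMod p)

namespace BGroup

open Matrix

variable {p r s t : ℕ} {L : Fin t → Matrix (Fin r) (Fin s) (ZMod p)}

instance : Mul (BGroup p r s t L) :=
  ⟨fun x y => (x.1 + y.1, x.2.1 + y.2.1,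
    fun i => x.2.2 i + y.2.2 i + x.1 ⬝ᵥ (L i).mulVec y.2.1)⟩

instance : One (BGroup p r s t L) := ⟨(0, 0, 0)⟩

instance : Inv (BGroup p r s t L) :=
  ⟨fun x => (-x.1, -x.2.1, fun i => -x.2.2 i + x.1 ⬝ᵥ (L i).mulVec x.2.1)⟩

lemma mul_def (x y : BGroup p r s t L) :
    x * y = (x.1 + y.1, x.2.1 + y.2.1,
      fun i => x.2.2 i + y.2.2 i + x.1 ⬝ᵥ (L i).mulVec y.2.1) := rfl

lemma one_def : (1 : BGroup p r s t L) = (0, 0, 0) := rfl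

lemma inv_def (x : BGroup p r s t L) :
    x⁻¹ = (-x.1, -x.2.1, fun i => -x.2.2 i + x.1 ⬝ᵥ (L i).mulVec x.2.1) := rfl

instance : Group (BGroup p r s t L) where
  mul := (· * ·)
  one := 1
  inv := (·⁻¹)
  mul_assoc x y z := by
    show (x * y) * z = x * (y * z)
    rw [mul_def, mul_def, mul_def, mul_def]
    refine Prod.ext ?_ (Prod.ext ?_ ?_) <;> dsimp
    · abel
    · abel
    · funext i
      simp [Matrix.mulVec_add, dotProduct_add, add_dotProduct]
      ring
  one_mul x := by
    show 1 * x = x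
    rw [mul_def, one_def]
    refine Prod.ext ?_ (Prod.ext ?_ ?_) <;> dsimp
    · abel
    · abel
    · funext i
      simp [zero_dotProduct]
  mul_one x := by
    show x * 1 = x
    rw [mul_def, one_def]
    refine Prod.ext ?_ (Prod.ext ?_ ?_) <;> dsimp
    · abel
    · abel
    · funext i
      simp [Matrix.mulVec_zero]
  inv_mul_cancel x := by
    show x⁻¹ * x = 1
    rw [mul_def, inv_def, one_def]
    refine Prod.ext ?_ (Prod.ext ?_ ?_) <;> dsimp
    · abel
    · abel
    · funext i
      simp [neg_dotProduct]

instance [NeZero p] : Finite (BGroup p r s t L) :=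
  inferInstanceAs (Finite (_ × _ × _))

end BGroup

/-- The companion-type matrix of a (monic) polynomial `a` of degree `e`:
entries `1` in positions `(i, i+1)` for the first `e-1` rows, bottom row
`(a_0, …, a_{e-1})`, and `0` elsewhere. -/
def companionMx (p e : ℕ) (a : Polynomial (ZMod p)) : Matrix (Fin e) (Fin e) (ZMod p) :=
  Matrix.of fun i j =>
    if (i : ℕ) + 1 = e then a.coeff (j : ℕ)
    else if (i : ℕ) + 1 = (j : ℕ) then 1 else 0

/-- The `(e-1) × e` matrix `[I_{e-1} | 0]` obtained by deleting the last row of `I_e`. -/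
def truncId (p e : ℕ) : Matrix (Fin (e - 1)) (Fin e) (ZMod p) :=
  Matrix.of fun i j => if (i : ℕ) = (j : ℕ) then 1 else 0

/-- The `(e-1) × e` matrix `[0 | I_{e-1}]` obtained by deleting the last row of a
companion matrix. -/
def truncShift (p e : ℕ) : Matrix (Fin (e - 1)) (Fin e) (ZMod p) :=
  Matrix.of fun i j => if (i : ℕ) + 1 = (j : ℕ) then 1 else 0

/-- Extension of a vector in `(ZMod p)^(e-1)` to `(ZMod p)^e` by a final zero. -/
def extendZero (p e : ℕ) (a : Fin (e - 1) → ZMod p) : Fin e → ZMod p :=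
  fun j => if h : (j : ℕ) < e - 1 then a ⟨j, h⟩ else 0

namespace BGroup
open Matrix

variable {p r s t : ℕ} {L : Fin t → Matrix (Fin r) (Fin s) (ZMod p)}

lemma mul_eq (x y z : BGroup p r s t L) (h1 : z.1 = x.1 + y.1)
    (h2 : z.2.1 = x.2.1 + y.2.1)
    (h3 : ∀ k, z.2.2 k = x.2.2 k + y.2.2 k + x.1 ⬝ᵥ (L k).mulVec y.2.1) :
    x * y = z := by
  refine Prod.ext ?_ (Prod.ext ?_ ?_)
  · show x.1 + y.1 = z.1; exact h1.symm
  · show x.2.1 + y.2.1 = z.2.1; exact h2.symm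
  · funext k
    show x.2.2 k + y.2.2 k + x.1 ⬝ᵥ (L k).mulVec y.2.1 = z.2.2 k
    exact (h3 k).symm

lemma inv_eq (x z : BGroup p r s t L) (h1 : z.1 = -x.1) (h2 : z.2.1 = -x.2.1)
    (h3 : ∀ k, z.2.2 k = -x.2.2 k + x.1 ⬝ᵥ (L k).mulVec x.2.1) :
    x⁻¹ = z := by
  refine Prod.ext ?_ (Prod.ext ?_ ?_)
  · show -x.1 = z.1; exact h1.symm
  · show -x.2.1 = z.2.1; exact h2.symm
  · funext k
    show -x.2.2 k + x.1 ⬝ᵥ (L k).mulVec x.2.1 = z.2.2 k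
    exact (h3 k).symm

lemma single_dot (M : Matrix (Fin r) (Fin s) (ZMod p)) (i : Fin r) (j : Fin s) :
    Pi.single i (1 : ZMod p) ⬝ᵥ M.mulVec (Pi.single j 1) = M i j := by
  simp [Matrix.mulVec_single, single_dotProduct]

lemma comm_eq (x y z : BGroup p r s t L) (hx2 : x.2.1 = 0) (hx3 : x.2.2 = 0)
    (hy1 : y.1 = 0) (hy3 : y.2.2 = 0)
    (hz1 : z.1 = 0) (hz2 : z.2.1 = 0)
    (hz3 : ∀ k, z.2.2 k = x.1 ⬝ᵥ (L k).mulVec y.2.1) :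
    x * y * x⁻¹ * y⁻¹ = z := by
  refine Prod.ext ?_ (Prod.ext ?_ ?_)
  · show x.1 + y.1 + -x.1 + -y.1 = z.1
    rw [hz1]; abel
  · show x.2.1 + y.2.1 + -x.2.1 + -y.2.1 = z.2.1
    rw [hz2]; abel
  · funext k
    show x.2.2 k + y.2.2 k + x.1 ⬝ᵥ (L k).mulVec y.2.1
        + (-x.2.2 k + x.1 ⬝ᵥ (L k).mulVec x.2.1)
        + (x.1 + y.1) ⬝ᵥ (L k).mulVec (-x.2.1)
        + (-y.2.2 k + y.1 ⬝ᵥ (L k).mulVec y.2.1)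
        + (x.1 + y.1 + -x.1) ⬝ᵥ (L k).mulVec (-y.2.1) = z.2.2 k
    rw [hz3 k, hx2, hx3, hy1, hy3]
    simp [Matrix.mulVec_zero, dotProduct_zero, zero_dotProduct,
      Matrix.mulVec_neg, dotProduct_neg, add_dotProduct]

/-- Membership versions (avoiding `*` on tuple literals). -/
lemma mul_mem' (H : Subgroup (BGroup p r s t L)) {x y : BGroup p r s t L}
    (hx : x ∈ H) (hy : y ∈ H) (z : BGroup p r s t L) (h1 : z.1 = x.1 + y.1)
    (h2 : z.2.1 = x.2.1 + y.2.1)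
    (h3 : ∀ k, z.2.2 k = x.2.2 k + y.2.2 k + x.1 ⬝ᵥ (L k).mulVec y.2.1) :
    z ∈ H := by
  rw [← mul_eq x y z h1 h2 h3]; exact H.mul_mem hx hy

lemma inv_mem' (H : Subgroup (BGroup p r s t L)) {x : BGroup p r s t L}
    (hx : x ∈ H) (z : BGroup p r s t L) (h1 : z.1 = -x.1) (h2 : z.2.1 = -x.2.1)
    (h3 : ∀ k, z.2.2 k = -x.2.2 k + x.1 ⬝ᵥ (L k).mulVec x.2.1) :
    z ∈ H := by
  rw [← inv_eq x z h1 h2 h3]; exact H.inv_mem hx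

lemma zero_mem' (H : Subgroup (BGroup p r s t L)) :
    ((0, 0, 0) : BGroup p r s t L) ∈ H := by
  have h : (1 : BGroup p r s t L) = (0, 0, 0) := rfl
  rw [← h]; exact H.one_mem

lemma comm_mem' (H : Subgroup (BGroup p r s t L)) {x y : BGroup p r s t L}
    (hx : x ∈ H) (hy : y ∈ H) (z : BGroup p r s t L)
    (hx2 : x.2.1 = 0) (hx3 : x.2.2 = 0) (hy1 : y.1 = 0) (hy3 : y.2.2 = 0)
    (hz1 : z.1 = 0) (hz2 : z.2.1 = 0)
    (hz3 : ∀ k, z.2.2 k = x.1 ⬝ᵥ (L k).mulVec y.2.1) :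
    z ∈ H := by
  rw [← comm_eq x y z hx2 hx3 hy1 hy3 hz1 hz2 hz3]
  exact H.mul_mem (H.mul_mem (H.mul_mem hx hy) (H.inv_mem hx)) (H.inv_mem hy)

lemma addSubgroup_top {n : ℕ} [NeZero p] (K : AddSubgroup (Fin n → ZMod p))
    (h : ∀ i : Fin n, Pi.single i (1 : ZMod p) ∈ K) (A : Fin n → ZMod p) : A ∈ K := by
  have hA : A = ∑ i, (A i).val • Pi.single i (1 : ZMod p) := by
    funext j
    rw [Finset.sum_apply]
    simp [Pi.single_apply, smul_ite, ZMod.natCast_val, ZMod.cast_id]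
  rw [hA]
  exact AddSubgroup.sum_mem K fun i _ => AddSubgroup.nsmul_mem K (h i) _

lemma mem_top' [NeZero p] {H : Subgroup (BGroup p r s t L)}
    (h1 : ∀ i : Fin r, ((Pi.single i 1, 0, 0) : BGroup p r s t L) ∈ H)
    (h2 : ∀ j : Fin s, ((0, Pi.single j 1, 0) : BGroup p r s t L) ∈ H)
    (h3 : ∀ k : Fin t, ((0, 0, Pi.single k 1) : BGroup p r s t L) ∈ H)
    (x : BGroup p r s t L) : x ∈ H := by
  have memA : ∀ A : Fin r → ZMod p, ((A, 0, 0) : BGroup p r s t L) ∈ H := by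
    let K : AddSubgroup (Fin r → ZMod p) :=
      { carrier := {A | ((A, 0, 0) : BGroup p r s t L) ∈ H}
        zero_mem' := zero_mem' H
        add_mem' := fun {v w} hv hw =>
          mul_mem' H (x := (v, 0, 0)) (y := (w, 0, 0)) hv hw (v + w, 0, 0) rfl (by simp)
            (by intro k; simp [Matrix.mulVec_zero])
        neg_mem' := fun {v} hv =>
          inv_mem' H (x := (v, 0, 0)) hv (-v, 0, 0) rfl (by simp)
            (by intro k; simp [Matrix.mulVec_zero]) }
    exact fun A => addSubgroup_top K h1 A
  have memB : ∀ B : Fin s → ZMod p, ((0, B, 0) : BGroup p r s t L) ∈ H := by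
    let K : AddSubgroup (Fin s → ZMod p) :=
      { carrier := {B | ((0, B, 0) : BGroup p r s t L) ∈ H}
        zero_mem' := zero_mem' H
        add_mem' := fun {v w} hv hw =>
          mul_mem' H (x := (0, v, 0)) (y := (0, w, 0)) hv hw (0, v + w, 0) (by simp) rfl
            (by intro k; simp [zero_dotProduct])
        neg_mem' := fun {v} hv =>
          inv_mem' H (x := (0, v, 0)) hv (0, -v, 0) (by simp) rfl
            (by intro k; simp [zero_dotProduct]) }
    exact fun B => addSubgroup_top K h2 B
  have memC : ∀ c : Fin t → ZMod p, ((0, 0, c) : BGroup p r s t L) ∈ H := by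
    let K : AddSubgroup (Fin t → ZMod p) :=
      { carrier := {c | ((0, 0, c) : BGroup p r s t L) ∈ H}
        zero_mem' := zero_mem' H
        add_mem' := fun {v w} hv hw =>
          mul_mem' H (x := (0, 0, v)) (y := (0, 0, w)) hv hw (0, 0, v + w) (by simp) (by simp)
            (by intro k; simp [zero_dotProduct])
        neg_mem' := fun {v} hv =>
          inv_mem' H (x := (0, 0, v)) hv (0, 0, -v) (by simp) (by simp)
            (by intro k; simp [zero_dotProduct]) }
    exact fun c => addSubgroup_top K h3 c
  obtain ⟨A, B, c⟩ := x
  have step1 : ((A, B, fun k => A ⬝ᵥ (L k).mulVec B) : BGroup p r s t L) ∈ H :=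
    mul_mem' H (memA A) (memB B) _ (by simp) (by simp) (by intro k; simp)
  exact mul_mem' H step1 (memC fun k => c k - A ⬝ᵥ (L k).mulVec B) (A, B, c)
    (by simp) (by simp) (by intro k; simp [Matrix.mulVec_zero])

end BGroup
section MatrixHelpers
open Matrix

variable {p e : ℕ}

lemma extendZero_castLE (a : Fin (e - 1) → ZMod p) (i : Fin (e - 1)) :
    extendZero p e a (Fin.castLE (Nat.sub_le e 1) i) = a i := by
  simp [extendZero, i.2]

lemma extendZero_last (he : 2 ≤ e) (a : Fin (e - 1) → ZMod p) (h : e - 1 < e) :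
    extendZero p e a ⟨e - 1, h⟩ = 0 := by
  simp [extendZero]

lemma extendZero_zero : extendZero p e (0 : Fin (e - 1) → ZMod p) = 0 := by
  funext j; simp only [extendZero]; split <;> simp

lemma extendZero_add (a b : Fin (e - 1) → ZMod p) :
    extendZero p e (a + b) = extendZero p e a + extendZero p e b := by
  funext j; simp only [extendZero, Pi.add_apply]; split <;> simp

lemma extendZero_eq_vecMul (a : Fin (e - 1) → ZMod p) :
    extendZero p e a = Matrix.vecMul a (truncId p e) := by
  funext j
  simp only [extendZero, Matrix.vecMul, dotProduct, truncId, Matrix.of_apply]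
  split
  · rename_i h
    rw [Finset.sum_eq_single (⟨(j : ℕ), h⟩ : Fin (e - 1))]
    · simp
    · intro i _ hne
      have : (i : ℕ) ≠ (j : ℕ) := fun hh => hne (Fin.ext hh)
      simp [this]
    · simp
  · rename_i h
    refine (Finset.sum_eq_zero ?_).symm
    intro i _
    have hi := i.2
    have : (i : ℕ) ≠ (j : ℕ) := by omega
    simp [this]

lemma truncId_mul_companion (he : 2 ≤ e) (a : Polynomial (ZMod p)) :
    truncId p e * companionMx p e a = truncShift p e := by
  ext i j
  simp only [Matrix.mul_apply, truncId, companionMx, truncShift, Matrix.of_apply]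
  have hilt : (i : ℕ) < e := lt_of_lt_of_le i.2 (Nat.sub_le e 1)
  rw [Finset.sum_eq_single (⟨(i : ℕ), hilt⟩ : Fin e)]
  · have h1 : ¬ ((i : ℕ) + 1 = e) := by have := i.2; omega
    simp [h1]
  · intro k _ hk
    have : (i : ℕ) ≠ (k : ℕ) := fun hh => hk (Fin.ext hh.symm)
    simp [this]
  · simp

lemma extendZero_dot_one (a : Fin (e - 1) → ZMod p) (b : Fin e → ZMod p) :
    extendZero p e a ⬝ᵥ (1 : Matrix (Fin e) (Fin e) (ZMod p)).mulVec b
      = a ⬝ᵥ (truncId p e).mulVec b := by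
  rw [extendZero_eq_vecMul, ← Matrix.dotProduct_mulVec, Matrix.mulVec_mulVec, Matrix.mul_one]

lemma extendZero_dot_companion (he : 2 ≤ e) (aa : Polynomial (ZMod p))
    (a : Fin (e - 1) → ZMod p) (b : Fin e → ZMod p) :
    extendZero p e a ⬝ᵥ (companionMx p e aa).mulVec b
      = a ⬝ᵥ (truncShift p e).mulVec b := by
  rw [extendZero_eq_vecMul, ← Matrix.dotProduct_mulVec, Matrix.mulVec_mulVec,
    truncId_mul_companion he]

end MatrixHelpers

section Homs
open Matrix

variable {p r s t : ℕ} {L : Fin t → Matrix (Fin r) (Fin s) (ZMod p)}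

/-- Projection onto the `i`-th coordinate of the first component. -/
def BGroup.coordHom (i : Fin r) : BGroup p r s t L →* Multiplicative (ZMod p) where
  toFun x := Multiplicative.ofAdd (x.1 i)
  map_one' := rfl
  map_mul' _ _ := rfl

/-- Abelianization-style projection. -/
def BGroup.abHom : BGroup p r s t L →*
    Multiplicative ((Fin r → ZMod p) × (Fin s → ZMod p)) where
  toFun x := Multiplicative.ofAdd (x.1, x.2.1)
  map_one' := rfl
  map_mul' _ _ := rfl

/-- The embedding `B([I|0],[0|I]) →* B(I, C(a))`. -/
def BGroup.phiHom (p e : ℕ) (a : Polynomial (ZMod p)) (he : 2 ≤ e) :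
    BGroup p (e - 1) e 2 ![truncId p e, truncShift p e] →*
      BGroup p e e 2 ![1, companionMx p e a] where
  toFun x := (extendZero p e x.1, x.2.1, x.2.2)
  map_one' := by
    refine Prod.ext ?_ (Prod.ext ?_ ?_)
    · show extendZero p e 0 = 0
      exact extendZero_zero
    · rfl
    · rfl
  map_mul' x y := by
    refine Prod.ext ?_ (Prod.ext ?_ ?_)
    · show extendZero p e (x.1 + y.1) = extendZero p e x.1 + extendZero p e y.1
      exact extendZero_add _ _
    · rfl
    · funext k
      show x.2.2 k + y.2.2 k + x.1 ⬝ᵥ (![truncId p e, truncShift p e] k).mulVec y.2.1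
        = x.2.2 k + y.2.2 k
          + extendZero p e x.1 ⬝ᵥ (![1, companionMx p e a] k).mulVec y.2.1
      congr 1
      fin_cases k
      · exact (extendZero_dot_one x.1 y.2.1).symm
      · exact (extendZero_dot_companion he a x.1 y.2.1).symm

end Homs
section Rank
open Matrix

lemma rank_ge_finrank {p : ℕ} [Fact p.Prime] {G : Type} [Group G] [Group.FG G]
    {V : Type} [AddCommGroup V] [Module (ZMod p) V]
    (f : G →* Multiplicative V) (hf : Function.Surjective f) :
    Module.finrank (ZMod p) V ≤ Group.rank G := by
  classical
  obtain ⟨S, hcard, hS⟩ := Group.rank_spec G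
  have hspan : Submodule.span (ZMod p)
      (Set.range fun x : S => Multiplicative.toAdd (f x)) = ⊤ := by
    rw [eq_top_iff]
    rintro v -
    have hv : Multiplicative.ofAdd v ∈ Subgroup.closure (f '' (S : Set G)) := by
      rw [← MonoidHom.map_closure, hS]
      obtain ⟨g, hg⟩ := hf (Multiplicative.ofAdd v)
      exact ⟨g, Subgroup.mem_top g, hg⟩
    have key : ∀ x ∈ Subgroup.closure (f '' (S : Set G)), Multiplicative.toAdd x ∈
        Submodule.span (ZMod p) (Set.range fun x : S => Multiplicative.toAdd (f x)) := by
      intro x hx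
      refine Subgroup.closure_induction (fun y hy => ?_) ?_
        (fun y z _ _ hy hz => ?_) (fun y _ hy => ?_) hx
      · obtain ⟨g, hg, rfl⟩ := hy
        exact Submodule.subset_span ⟨⟨g, hg⟩, rfl⟩
      · exact Submodule.zero_mem _
      · exact Submodule.add_mem _ hy hz
      · exact Submodule.neg_mem _ hy
    exact key _ hv
  have hfin := finrank_le_of_span_eq_top hspan
  rwa [Fintype.card_coe, hcard] at hfin

lemma bgroup_rank_eq {p r s : ℕ} [Fact p.Prime]
    {L : Fin 2 → Matrix (Fin r) (Fin s) (ZMod p)}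
    (i0 : Fin r) (j0 j1 : Fin s) (h00 : L 0 i0 j0 = 1) (h10 : L 1 i0 j0 = 0)
    (h01 : L 0 i0 j1 = 0) (h11 : L 1 i0 j1 = 1) :
    Group.rank (BGroup p r s 2 L) = r + s := by
  haveI : NeZero p := ⟨(Fact.out : p.Prime).ne_zero⟩
  classical
  refine le_antisymm ?_ ?_
  · set S : Finset (BGroup p r s 2 L) :=
      (Finset.univ.image fun i : Fin r => ((Pi.single i 1, 0, 0) : BGroup p r s 2 L)) ∪
      (Finset.univ.image fun j : Fin s => ((0, Pi.single j 1, 0) : BGroup p r s 2 L))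
      with hSdef
    have h1 : ∀ i : Fin r,
        ((Pi.single i 1, 0, 0) : BGroup p r s 2 L) ∈ Subgroup.closure (S : Set (BGroup p r s 2 L)) := by
      intro i
      apply Subgroup.subset_closure
      exact Finset.mem_coe.mpr (Finset.mem_union_left _ (Finset.mem_image_of_mem _ (Finset.mem_univ i)))
    have h2 : ∀ j : Fin s,
        ((0, Pi.single j 1, 0) : BGroup p r s 2 L) ∈ Subgroup.closure (S : Set (BGroup p r s 2 L)) := by
      intro j
      apply Subgroup.subset_closure
      exact Finset.mem_coe.mpr (Finset.mem_union_right _ (Finset.mem_image_of_mem _ (Finset.mem_univ j)))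
    have h3 : ∀ k : Fin 2,
        ((0, 0, Pi.single k 1) : BGroup p r s 2 L) ∈ Subgroup.closure (S : Set (BGroup p r s 2 L)) := by
      intro k
      fin_cases k
      · refine BGroup.comm_mem' _ (h1 i0) (h2 j0) (0, 0, Pi.single 0 1)
          rfl rfl rfl rfl rfl rfl ?_
        intro k
        rw [BGroup.single_dot]
        fin_cases k
        · simp [h00]
        · simp [h10, Pi.single_apply]
      · refine BGroup.comm_mem' _ (h1 i0) (h2 j1) (0, 0, Pi.single 1 1)
          rfl rfl rfl rfl rfl rfl ?_
        intro k
        rw [BGroup.single_dot]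
        fin_cases k
        · simp [h01, Pi.single_apply]
        · simp [h11]
    have hS : Subgroup.closure (S : Set (BGroup p r s 2 L)) = ⊤ := by
      rw [eq_top_iff]
      exact fun x _ => BGroup.mem_top' h1 h2 h3 x
    refine (Group.rank_le hS).trans ?_
    refine (Finset.card_union_le _ _).trans ?_
    exact add_le_add (Finset.card_image_le.trans (by simp))
      (Finset.card_image_le.trans (by simp))
  · have hf : Function.Surjective
        (BGroup.abHom : BGroup p r s 2 L →* Multiplicative ((Fin r → ZMod p) × (Fin s → ZMod p))) :=
      fun v => ⟨(v.toAdd.1, v.toAdd.2, 0), rfl⟩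
    have h := rank_ge_finrank (p := p) _ hf
    rwa [Module.finrank_prod, Module.finrank_pi, Module.finrank_pi,
      Fintype.card_fin, Fintype.card_fin] at h

end Rank
/-- For `p > 2` prime, `e ≥ 2` and `a(t)` a monic polynomial of
degree `e` over `Z_p`, set `G = B(I_e, C(a(t)))` and `M = B([I_{e-1}|0], [0|I_{e-1}])`.
Then `(a,b,c) ↦ ((a,0),b,c)` is an injective group homomorphism `M → G` whose image
is a maximal subgroup of `G`, and `d(G) = 1 + d(M)`.  (In particular `G` has a maximal
subgroup whose isomorphism type depends only on `p` and `e`, since `M` does not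
depend on `a(t)`.) -/
theorem bgroup_maximal_subgroup_of_companion
    (p : ℕ) [Fact p.Prime] (hp2 : 2 < p) (e : ℕ) (he : 2 ≤ e)
    (a : Polynomial (ZMod p)) (ha : a.Monic) (hdeg : a.natDegree = e) :
    ∃ φ : BGroup p (e - 1) e 2 ![truncId p e, truncShift p e] →*
          BGroup p e e 2 ![1, companionMx p e a],
      (∀ x : BGroup p (e - 1) e 2 ![truncId p e, truncShift p e],
          φ x = (extendZero p e x.1, x.2.1, x.2.2)) ∧
      Function.Injective φ ∧
      IsCoatom φ.range ∧
      Group.rank (BGroup p e e 2 ![1, companionMx p e a]) =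
        1 + Group.rank (BGroup p (e - 1) e 2 ![truncId p e, truncShift p e]) := by
  haveI : NeZero p := ⟨(Fact.out : p.Prime).ne_zero⟩
  have hlast : e - 1 < e := by omega
  refine ⟨BGroup.phiHom p e a he, fun x => rfl, ?_, ?_, ?_⟩
  · -- injectivity
    intro x y hxy
    have h1 : extendZero p e x.1 = extendZero p e y.1 :=
      congrArg (fun z : BGroup p e e 2 ![1, companionMx p e a] => z.1) hxy
    have h2 : x.2 = y.2 :=
      congrArg (fun z : BGroup p e e 2 ![1, companionMx p e a] => z.2) hxy
    refine Prod.ext ?_ h2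
    funext i
    have h3 := congrFun h1 (Fin.castLE (Nat.sub_le e 1) i)
    rwa [extendZero_castLE, extendZero_castLE] at h3
  · -- maximality
    set φ := BGroup.phiHom p e a he with hφ
    set ψ : BGroup p e e 2 ![1, companionMx p e a] →* Multiplicative (ZMod p) :=
      BGroup.coordHom ⟨e - 1, hlast⟩ with hψ
    have hsurj : Function.Surjective ψ := fun v => ⟨((fun _ => v.toAdd), 0, 0), rfl⟩
    have hrange : φ.range = ψ.ker := by
      ext x
      constructor
      · rintro ⟨y, rfl⟩
        rw [MonoidHom.mem_ker]
        show Multiplicative.ofAdd (extendZero p e y.1 ⟨e - 1, hlast⟩) = 1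
        rw [ofAdd_eq_one]
        exact extendZero_last he y.1 hlast
      · intro hx
        have hx0 : x.1 ⟨e - 1, hlast⟩ = 0 := by
          rw [MonoidHom.mem_ker] at hx
          have : Multiplicative.ofAdd (x.1 ⟨e - 1, hlast⟩) = 1 := hx
          rwa [ofAdd_eq_one] at this
        refine ⟨(fun i => x.1 (Fin.castLE (Nat.sub_le e 1) i), x.2.1, x.2.2), ?_⟩
        show (extendZero p e (fun i => x.1 (Fin.castLE (Nat.sub_le e 1) i)), x.2.1, x.2.2) = x
        refine Prod.ext ?_ rfl
        funext j
        show (if h : (j : ℕ) < e - 1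
          then x.1 (Fin.castLE (Nat.sub_le e 1) ⟨(j : ℕ), h⟩) else 0) = x.1 j
        by_cases h : (j : ℕ) < e - 1
        · rw [dif_pos h]
          exact congrArg x.1 (Fin.ext rfl)
        · rw [dif_neg h]
          have hj : j = ⟨e - 1, hlast⟩ :=
            Fin.ext (show (j : ℕ) = e - 1 by have := j.2; omega)
          rw [hj, hx0]
    have hidx : φ.range.index = p := by
      rw [hrange, Subgroup.index_ker, MonoidHom.range_eq_top_of_surjective ψ hsurj,
        Subgroup.card_top, Nat.card_congr Multiplicative.toAdd, Nat.card_zmod]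
    refine ⟨?_, ?_⟩
    · intro htop
      rw [htop, Subgroup.index_top] at hidx
      omega
    · intro K hK
      have hle := hK.le
      have hmul := Subgroup.relIndex_mul_index hle
      rw [hidx] at hmul
      have hdvd : K.index ∣ p := Dvd.intro_left _ hmul
      rcases (Fact.out : p.Prime).eq_one_or_self_of_dvd _ hdvd with h1 | hp
      · exact Subgroup.index_eq_one.mp h1
      · exfalso
        rw [hp] at hmul
        have hrel : φ.range.relIndex K = 1 :=
          Nat.eq_of_mul_eq_mul_right (Fact.out : p.Prime).pos (by rw [hmul, one_mul])
        exact hK.not_ge (Subgroup.relIndex_eq_one.mp hrel)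
  · -- ranks
    have h0e : (0 : ℕ) < e := by omega
    have h1e : (1 : ℕ) < e := by omega
    have h0e1 : (0 : ℕ) < e - 1 := by omega
    have hne : ¬ ((0 : ℕ) + 1 = e) := by omega
    have hG := bgroup_rank_eq (p := p) (L := ![1, companionMx p e a])
      ⟨0, h0e⟩ ⟨0, h0e⟩ ⟨1, h1e⟩
      (by show (1 : Matrix (Fin e) (Fin e) (ZMod p)) _ _ = 1
          exact Matrix.one_apply_eq _)
      (by show companionMx p e a _ _ = 0
          simp [companionMx, hne])
      (by show (1 : Matrix (Fin e) (Fin e) (ZMod p)) _ _ = 0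
          exact Matrix.one_apply_ne (by simp [Fin.ext_iff]))
      (by show companionMx p e a _ _ = 1
          simp [companionMx, hne])
    have hM := bgroup_rank_eq (p := p) (L := ![truncId p e, truncShift p e])
      ⟨0, h0e1⟩ ⟨0, h0e⟩ ⟨1, h1e⟩
      (by show truncId p e _ _ = 1; simp [truncId])
      (by show truncShift p e _ _ = 0; simp [truncShift])
      (by show truncId p e _ _ = 0; simp [truncId])
      (by show truncShift p e _ _ = 1; simp [truncShift])
    rw [hG, hM]
    omega
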